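/- Let X be an inner product space over ℂ, x, y ∈ X and a, A ∈ ℂ. If ‖x − ((a+A)/2)•y‖ ≤ (1/2)·|A − a|·‖y‖, then 0 ≤ ‖x‖²·‖y‖² − |⟨x,y⟩|² ≤ (1/4)·|A − a|²·‖y‖⁴ − |((a+A)/2)·‖y‖² − ⟨x,y⟩|². -/

import Mathlib

open scoped InnerProductSpace ComplexConjugate

lemma key_identity_rcbs {X : Type*} [NormedAddCommGroup X] [InnerProductSpace ℂ X]
    (x y : X) (c : ℂ) :
    ‖y‖^2 * ‖x - c • y‖^2 =
      ‖x‖^2 * ‖y‖^2 - ‖⟪y, x⟫_ℂ‖^2 + ‖c * (‖y‖:ℂ)^2 - ⟪y, x⟫_ℂ‖^2 := by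
  have h1 : ‖x - c • y‖^2 = ‖x‖^2 - 2 * Complex.re (c * ⟪x, y⟫_ℂ) + ‖c‖^2 * ‖y‖^2 := by
    rw [@norm_sub_sq ℂ]
    simp [inner_smul_right, norm_smul]
    ring
  have ht : ⟪y, x⟫_ℂ = conj ⟪x, y⟫_ℂ := by rw [inner_conj_symm]
  rw [h1, Complex.sq_norm, Complex.sq_norm, Complex.sq_norm, ht]
  generalize ⟪x, y⟫_ℂ = t
  have hy : ((‖y‖:ℂ))^2 = ((‖y‖^2 : ℝ) : ℂ) := by push_cast; ring
  rw [hy]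
  simp only [Complex.normSq_apply, Complex.mul_re, Complex.mul_im, Complex.sub_re,
    Complex.sub_im, Complex.conj_re, Complex.conj_im, Complex.ofReal_re,
    Complex.ofReal_im, Complex.normSq_mk]
  ring

theorem reverse_cbs_refined {X : Type*} [NormedAddCommGroup X]
    [InnerProductSpace ℂ X] (x y : X) (a A : ℂ)
    (h : ‖x - ((a + A) / 2) • y‖ ≤ (1 / 2) * ‖A - a‖ * ‖y‖) :
    0 ≤ ‖x‖ ^ 2 * ‖y‖ ^ 2 - ‖⟪y, x⟫_ℂ‖ ^ 2 ∧
      ‖x‖ ^ 2 * ‖y‖ ^ 2 - ‖⟪y, x⟫_ℂ‖ ^ 2 ≤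
        (1 / 4) * ‖A - a‖ ^ 2 * ‖y‖ ^ 4 -
          ‖((a + A) / 2) * (‖y‖ : ℂ) ^ 2 - ⟪y, x⟫_ℂ‖ ^ 2 := by
  have hCS : ‖⟪y, x⟫_ℂ‖ ≤ ‖y‖ * ‖x‖ := by
    simpa using norm_inner_le_norm (𝕜 := ℂ) y x
  constructor
  · nlinarith [norm_nonneg ⟪y, x⟫_ℂ, norm_nonneg x, norm_nonneg y]
  · have h2 : ‖x - ((a + A) / 2) • y‖ ^ 2 ≤ (1/4) * ‖A - a‖ ^ 2 * ‖y‖ ^ 2 := by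
      nlinarith [norm_nonneg (x - ((a + A) / 2) • y), norm_nonneg (A - a), norm_nonneg y]
    have key := key_identity_rcbs x y ((a + A) / 2)
    nlinarith [mul_le_mul_of_nonneg_left h2 (sq_nonneg ‖y‖)]
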